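/- Let (A,·,∘) be a transposed Novikov-Poisson algebra and D : A → A a linear map that is a derivation of both (A,·) and (A,∘). Then [x,y] := D(x)∘y − D(y)∘x defines a Lie bracket on A making (A,·,[·,·]) a transposed Poisson algebra. -/
import Mathlib


/-- If D is a derivation of both products of a transposed
Novikov-Poisson algebra, then [x,y] = D(x)∘y − D(y)∘x is a Lie bracket making
(A,·,[·,·]) a transposed Poisson algebra. -/
theorem stmt1 {k A : Type*} [Field k] [AddCommGroup A] [Module k A]
    (hchar : (2:k) ≠ 0)
    (mul cir : A →ₗ[k] A →ₗ[k] A)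
    (hcomm : ∀ x y : A, mul x y = mul y x)
    (hassoc : ∀ x y z : A, mul (mul x y) z = mul x (mul y z))
    (hnov1 : ∀ x y z : A, cir (cir x y) z = cir (cir x z) y)
    (hnov2 : ∀ x y z : A, cir (cir x y) z - cir x (cir y z) = cir (cir y x) z - cir y (cir x z))
    (htnp1 : ∀ x y z : A, cir (mul x y) z = cir (mul x z) y)
    (htnp2 : ∀ x y z : A, (2:k) • mul z (cir x y) = cir (mul z x) y + cir x (mul z y))
    (D : A →ₗ[k] A)
    (hDmul : ∀ x y : A, D (mul x y) = mul (D x) y + mul x (D y))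
    (hDcir : ∀ x y : A, D (cir x y) = cir (D x) y + cir x (D y))
    (br : A → A → A)
    (hbr : ∀ x y : A, br x y = cir (D x) y - cir (D y) x) :
    (∀ x y : A, br x y = - br y x) ∧
    (∀ x y z : A, br (br x y) z + br (br y z) x + br (br z x) y = 0) ∧
    (∀ x y z : A, (2:k) • mul z (br x y) = br (mul z x) y + br x (mul z y)) := by
  refine ⟨?_, ?_, ?_⟩
  · intro x y
    rw [hbr, hbr]
    abel
  · intro x y z
    simp only [hbr, hDcir, map_sub, map_add, LinearMap.sub_apply, LinearMap.add_apply]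
    rw [hnov1 (D (D x)) z y, hnov1 (D (D y)) x z, hnov1 (D (D z)) y x,
      eq_add_of_sub_eq (hnov2 (D x) (D y) z),
      eq_add_of_sub_eq (hnov2 (D y) (D z) x),
      eq_add_of_sub_eq (hnov2 (D z) (D x) y)]
    abel
  · intro x y z
    simp only [hbr, hDmul, map_sub, map_add, LinearMap.sub_apply, LinearMap.add_apply,
      smul_sub]
    rw [htnp2 (D x) y z, htnp2 (D y) x z, htnp1 (D z) x y]
    abel
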